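/- If G is a graph of order n ≥ 4 with minimum degree at least one, then γ^t_StR(G) ≤ 2(γ_StR(G) − 1), where γ_StR(G) is the strong Roman domination number. -/
import Mathlib


open Finset

variable {V : Type*} [Fintype V]

/-- The degree of a vertex. -/
noncomputable def degN (G : SimpleGraph V) (v : V) : ℕ := {u | G.Adj v u}.ncard

/-- Maximum degree. -/
noncomputable def maxDeg (G : SimpleGraph V) : ℕ := Finset.univ.sup (degN G)

/-- Minimum degree. -/
noncomputable def minDeg (G : SimpleGraph V) : ℕ := sInf {d | ∃ v, degN G v = d}

/-- No isolated vertex. -/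
def NoIsolated (G : SimpleGraph V) : Prop := ∀ v, ∃ u, G.Adj v u

/-- Total strong Roman dominating function. `(Δ+1)/2 = ⌈Δ/2⌉` and
`(m+1)/2 = ⌈m/2⌉` in natural-number arithmetic. -/
def IsTSRDF (G : SimpleGraph V) (f : V → ℕ) : Prop :=
  (∀ v, f v ≤ (maxDeg G + 1) / 2 + 1) ∧
  (∀ v, f v = 0 → ∃ u, G.Adj v u ∧
      1 + ({w | G.Adj u w ∧ f w = 0}.ncard + 1) / 2 ≤ f u) ∧
  (∀ v, 0 < f v → ∃ u, G.Adj v u ∧ 0 < f u)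

/-- The total strong Roman domination number. -/
noncomputable def tsrd (G : SimpleGraph V) : ℕ :=
  sInf {k | ∃ f : V → ℕ, IsTSRDF G f ∧ ∑ v, f v = k}

/-- Strong Roman dominating function. -/
def IsSRDF (G : SimpleGraph V) (f : V → ℕ) : Prop :=
  (∀ v, f v ≤ (maxDeg G + 1) / 2 + 1) ∧
  (∀ v, f v = 0 → ∃ u, G.Adj v u ∧
      1 + ({w | G.Adj u w ∧ f w = 0}.ncard + 1) / 2 ≤ f u)

/-- Strong Roman domination number. -/
noncomputable def srd (G : SimpleGraph V) : ℕ :=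
  sInf {k | ∃ f : V → ℕ, IsSRDF G f ∧ ∑ v, f v = k}


private lemma tsrd_le_of {V : Type*} [Fintype V] (G : SimpleGraph V) {g : V → ℕ}
    (hg : IsTSRDF G g) : tsrd G ≤ ∑ v, g v :=
  Nat.sInf_le ⟨g, hg, rfl⟩

private lemma one_tsrdf {V : Type*} [Fintype V] (G : SimpleGraph V) (hni : NoIsolated G) :
    IsTSRDF G (fun _ => 1) := by
  refine ⟨fun v => Nat.le_add_left 1 _, fun v hv => absurd hv one_ne_zero, fun v _ => ?_⟩
  obtain ⟨u, hu⟩ := hni v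
  exact ⟨u, hu, one_pos⟩

private lemma main_bound {V : Type*} [Fintype V] (G : SimpleGraph V)
    (hn : 4 ≤ Fintype.card V) (hni : NoIsolated G) (f : V → ℕ) (hf : IsSRDF G f) :
    tsrd G + 2 ≤ 2 * ∑ v, f v ∧ 2 ≤ ∑ v, f v := by
  classical
  obtain ⟨hcap, hdom⟩ := hf
  by_cases hZe : ∀ v, 0 < f v
  · -- no zero vertices: f itself is a TSRDF
    have hwn : Fintype.card V ≤ ∑ v, f v := by
      calc Fintype.card V = ∑ _v : V, 1 := by simp
        _ ≤ ∑ v, f v := Finset.sum_le_sum (fun v _ => hZe v)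
    have ht : tsrd G ≤ ∑ v, f v := by
      refine tsrd_le_of G ⟨hcap, fun v hv => absurd hv (by have := hZe v; omega), fun v _ => ?_⟩
      obtain ⟨u, hu⟩ := hni v
      exact ⟨u, hu, hZe u⟩
    omega
  · push_neg at hZe
    obtain ⟨v0, hv0⟩ := hZe
    have hv0' : f v0 = 0 := by omega
    set P : Finset V := univ.filter (fun v => 0 < f v) with hP
    set Z : Finset V := univ.filter (fun v => ¬ 0 < f v) with hZs
    have hPZ : P.card + Z.card = Fintype.card V := by
      rw [hP, hZs, Finset.card_filter_add_card_filter_not, Finset.card_univ]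
    have hsumP : ∑ v ∈ P, f v = ∑ v, f v := by
      rw [hP]
      exact Finset.sum_filter_of_ne (fun v _ h => by omega)
    -- dominator z of v0
    obtain ⟨z, hadj, hdomz⟩ := hdom v0 hv0'
    have hk1 : 1 ≤ {x | G.Adj z x ∧ f x = 0}.ncard := by
      have : ({x | G.Adj z x ∧ f x = 0}).Nonempty := ⟨v0, hadj.symm, hv0'⟩
      have := (Set.ncard_pos (Set.toFinite _)).mpr this
      omega
    have hfz : 2 ≤ f z := by omega
    have hzP : z ∈ P := by simp [hP]; omega
    have hcardP : P.card + 1 ≤ ∑ v, f v := by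
      have h1 : (P.erase z).card ≤ ∑ v ∈ P.erase z, f v := by
        have := Finset.card_nsmul_le_sum (P.erase z) f 1 (fun v hv => by
          have := Finset.mem_of_mem_erase hv
          simp [hP] at this
          omega)
        simpa using this
      have h2 := Finset.sum_erase_add P f hzP
      have h3 : (P.erase z).card = P.card - 1 := Finset.card_erase_of_mem hzP
      have h4 : 1 ≤ P.card := Finset.card_pos.mpr ⟨z, hzP⟩
      omega
    have hni2 := hni
    choose b hb using hni2
    set I : Finset V := univ.filter (fun v => 0 < f v ∧ ∀ u, G.Adj v u → f u = 0) with hI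
    set B : Finset V := I.image b with hB
    have hBzero : ∀ u ∈ B, f u = 0 := by
      intro u hu
      rw [hB] at hu
      obtain ⟨x, hx, rfl⟩ := Finset.mem_image.mp hu
      rw [hI] at hx
      simp at hx
      exact hx.2 _ (hb x)
    set g : V → ℕ := fun u => f u + (if u ∈ B then 1 else 0) with hg
    have hfg : ∀ u, f u ≤ g u := fun u => by simp [hg]
    have hgT : IsTSRDF G g := by
      refine ⟨?_, ?_, ?_⟩
      · intro v
        by_cases hvB : v ∈ B
        · have : g v = 1 := by simp [hg, hvB, hBzero v hvB]
          rw [this]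
          exact Nat.le_add_left 1 _
        · have : g v = f v := by simp [hg, hvB]
          rw [this]; exact hcap v
      · intro v hv
        have hfv0 : f v = 0 := by have := hfg v; omega
        obtain ⟨u, hu, hules⟩ := hdom v hfv0
        refine ⟨u, hu, ?_⟩
        have hsub : {x | G.Adj u x ∧ g x = 0} ⊆ {x | G.Adj u x ∧ f x = 0} := by
          intro x hx
          exact ⟨hx.1, by have h2 := hx.2; have := hfg x; omega⟩
        have hcard := Set.ncard_le_ncard hsub (Set.toFinite _)
        have := hfg u
        omega
      · intro v hv
        by_cases hvB : v ∈ B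
        · obtain ⟨x, hx, hxv⟩ := Finset.mem_image.mp (by rw [hB] at hvB; exact hvB)
          have hxpos : 0 < f x := by rw [hI] at hx; simp at hx; exact hx.1
          refine ⟨x, ?_, ?_⟩
          · have := hb x; rw [hxv] at this; exact this.symm
          · have := hfg x; omega
        · have hfv : 0 < f v := by
            have : g v = f v := by simp [hg, hvB]
            omega
          by_cases hvI : v ∈ I
          · refine ⟨b v, hb v, ?_⟩
            have hbB : b v ∈ B := by rw [hB]; exact Finset.mem_image_of_mem b hvI
            simp [hg, hbB]
          · rw [hI] at hvI
            simp only [Finset.mem_filter, Finset.mem_univ, true_and, not_and, not_forall] at hvI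
            obtain ⟨u, hu, hfu⟩ := hvI hfv
            exact ⟨u, hu, by have := hfg u; omega⟩
    have hgsum : ∑ v, g v = (∑ v, f v) + B.card := by
      simp only [hg]
      rw [Finset.sum_add_distrib]
      congr 1
      rw [Finset.sum_ite_mem]
      simp
    have htsrd1 : tsrd G ≤ (∑ v, f v) + B.card := by
      have := tsrd_le_of G hgT
      omega
    by_cases hbc : B.card + 2 ≤ ∑ v, f v
    · constructor <;> omega
    · -- tight case
      have hBI : B.card ≤ I.card := Finset.card_image_le
      have hIP : I.card ≤ P.card := by
        apply Finset.card_le_card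
        intro v hv
        rw [hI] at hv; rw [hP]
        simp at hv ⊢
        exact hv.1
      have hPw : ∑ v, f v = P.card + 1 := by omega
      have hsplit : ∑ v ∈ P, f v = ∑ v ∈ P, 1 + ∑ v ∈ P, (f v - 1) := by
        rw [← Finset.sum_add_distrib]
        refine Finset.sum_congr rfl (fun v hv => ?_)
        simp [hP] at hv
        omega
      have hconst : ∑ v ∈ P, (1 : ℕ) = P.card := by simp
      have heq1 : ∑ v ∈ P, (f v - 1) = 1 := by omega
      have huniq : ∀ u1 ∈ P, ∀ u2 ∈ P, 2 ≤ f u1 → 2 ≤ f u2 → u1 = u2 := by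
        intro u1 h1 u2 h2 hf1 hf2
        by_contra hne12
        have hsub : ({u1, u2} : Finset V) ⊆ P := by
          intro x hx
          simp at hx
          rcases hx with rfl | rfl <;> assumption
        have hle := Finset.sum_le_sum_of_subset (f := fun v => f v - 1) hsub
        rw [Finset.sum_pair hne12] at hle
        have hle' : f u1 - 1 + (f u2 - 1) ≤ ∑ v ∈ P, (f v - 1) := by simpa using hle
        omega
      have hfz2 : f z ≤ 2 := by
        have h := Finset.single_le_sum (f := fun v => f v - 1) (fun i _ => Nat.zero_le _) hzP
        have h' : f z - 1 ≤ ∑ v ∈ P, (f v - 1) := by simpa using h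
        omega
      have hZadj : ∀ v, f v = 0 → G.Adj z v := by
        intro v hv
        obtain ⟨u, huv, hud⟩ := hdom v hv
        have hk1' : 1 ≤ {x | G.Adj u x ∧ f x = 0}.ncard := by
          have : ({x | G.Adj u x ∧ f x = 0}).Nonempty := ⟨v, huv.symm, hv⟩
          have := (Set.ncard_pos (Set.toFinite _)).mpr this
          omega
        have hfu2 : 2 ≤ f u := by omega
        have huP : u ∈ P := by simp [hP]; omega
        have := huniq u huP z hzP hfu2 hfz
        subst this
        exact huv.symm
      have hk2 : {x | G.Adj z x ∧ f x = 0}.ncard ≤ 2 := by omega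
      have hZk : Z.card ≤ 2 := by
        have hsub : (↑Z : Set V) ⊆ {x | G.Adj z x ∧ f x = 0} := by
          intro x hx
          simp [hZs] at hx
          have hx0 : f x = 0 := by omega
          exact ⟨hZadj x hx0, hx0⟩
        have := Set.ncard_le_ncard hsub (Set.toFinite _)
        rw [Set.ncard_coe_finset] at this
        omega
      have htn : tsrd G ≤ Fintype.card V := by
        have := tsrd_le_of G (one_tsrdf G hni)
        simpa using this
      constructor <;> omega

theorem stmt10 (G : SimpleGraph V) (hn : 4 ≤ Fintype.card V) (hni : NoIsolated G) :
    tsrd G ≤ 2 * (srd G - 1) := by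
  classical
  have h1 : IsSRDF G (fun _ => 1) := by
    constructor
    · intro v
      exact Nat.le_add_left 1 _
    · intro v hv
      exact absurd hv one_ne_zero
  have hne : {k | ∃ f : V → ℕ, IsSRDF G f ∧ ∑ v, f v = k}.Nonempty := ⟨_, _, h1, rfl⟩
  have hmem := Nat.sInf_mem hne
  rw [Set.mem_setOf_eq] at hmem
  obtain ⟨f, hf, hfw⟩ := hmem
  obtain ⟨hA, hB⟩ := main_bound G hn hni f hf
  have hsrd : srd G = ∑ v, f v := by rw [srd, hfw]
  clear hne h1 hf hfw hni hn
  omega
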